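/- For all k, r ∈ ℕ and every nonempty finite set V: (1) if γ ∈ P(V^k) is graph-like, then C_{k,r}∘γ is graph-like; (2) if k ≥ 2 and γ ∈ P(V^k) is graph-like and C_{k,r}-stable, then pr_{k-1} γ is C_{k-1,r}-stable. -/

import Mathlib

open Classical Matrix

noncomputable section

/-- `k`-tuples of elements of `V`. -/
abbrev Tup (V : Type) (k : ℕ) := Fin k → V

variable {V : Type}

/-- `v⟨i,x⟩` : the tuple obtained from `v` by substituting, for each `s`,
the entry of `v` in position `i s` by `x s`. -/
def substTup {k r : ℕ} (v : Tup V k) (i : Fin r → Fin k) (x : Tup V r) : Tup V k :=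
  fun j => if h : ∃ s, i s = j then x h.choose else v j

/-- `pr_j v = (v_{j 1}, …, v_{j r})`. -/
def prTup {k r : ℕ} (j : Fin r → Fin k) (v : Tup V k) : Tup V r := fun s => v (j s)

/-- `(w_1, …, w_r, w_r, …, w_r) : V^k`. -/
def extendTup [Nonempty V] {r : ℕ} (k : ℕ) (w : Tup V r) : Tup V k := fun i =>
  if h : (i : ℕ) < r then w ⟨i, h⟩
  else if h' : 0 < r then w ⟨r - 1, by omega⟩
  else Classical.arbitrary V

/-- The `r`-projection `pr_r γ` of a labelled partition (presented as a setoid) of `V^k`. -/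
def prPart [Nonempty V] {k : ℕ} (r : ℕ) (γ : Setoid (Tup V k)) : Setoid (Tup V r) where
  r w w' := γ.r (extendTup k w) (extendTup k w')
  iseqv := ⟨fun _ => γ.iseqv.refl _, fun h => γ.iseqv.symm h, fun h h' => γ.iseqv.trans h h'⟩

/-- `v^τ`, the tuple with `i`-th entry `v (τ⁻¹ i)`. -/
def permTup {k : ℕ} (τ : Equiv.Perm (Fin k)) (v : Tup V k) : Tup V k := fun i => v (τ.symm i)

/-- `γ ⪯ ρ` : the partition `ρ` refines the partition `γ`. -/
def Refines {A : Type*} (γ ρ : Setoid A) : Prop := ∀ u v : A, ρ.r u v → γ.r u v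

/-- `γ ≈ ρ` : the partitions mutually refine each other. -/
def PartEquiv {A : Type*} (γ ρ : Setoid A) : Prop := Refines γ ρ ∧ Refines ρ γ

/-- Invariance of a partition of `V^k` under `Sym(k)`. -/
def Invariant {k : ℕ} (γ : Setoid (Tup V k)) : Prop :=
  ∀ u v : Tup V k, γ.r u v → ∀ τ : Equiv.Perm (Fin k), γ.r (permTup τ u) (permTup τ v)

/-- `r`-consistency of a partition of `V^k`. -/
def Consistent [Nonempty V] {k : ℕ} (r : ℕ) (γ : Setoid (Tup V k)) : Prop :=
  ∀ u v : Tup V k, γ.r u v → ∀ j : Fin r → Fin k,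
    (prPart r γ).r (prTup j u) (prTup j v)

/-- Graph-like partitions of `V^k`. -/
def GraphLike [Nonempty V] {k : ℕ} (γ : Setoid (Tup V k)) : Prop :=
  Invariant γ ∧ (∀ r ≤ k, Consistent r γ) ∧
    ∀ u v : Tup V k, γ.r u v → ∀ i j : Fin k, u i = u j → v i = v j

/-- `{x ∈ V^r : γ(u⟨i,x⟩) = φ_i for all i ∈ [k]^(r)}`, where the colour tuple `φ` is
given by representatives. -/
def WLSet {k r : ℕ} (γ : Setoid (Tup V k)) (u : Tup V k)
    (φ : (Fin r → Fin k) → Tup V k) : Set (Tup V r) :=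
  {x | ∀ i : Fin r → Fin k, Function.Injective i → γ.r (substTup u i x) (φ i)}

/-- `{x ∈ V^r : γ(u⟨i,x⟩) = σ}`, where the colour `σ` is given by a representative `w`. -/
def CSet {k r : ℕ} (γ : Setoid (Tup V k)) (u : Tup V k)
    (i : Fin r → Fin k) (w : Tup V k) : Set (Tup V r) :=
  {x | γ.r (substTup u i x) w}

/-- `WL_{k,r}`-stability of a partition of `V^k`. -/
def WLStable {k : ℕ} (r : ℕ) (γ : Setoid (Tup V k)) : Prop :=
  r < k → ∀ u v : Tup V k, γ.r u v →
    ∀ φ : (Fin r → Fin k) → Tup V k, (WLSet γ u φ).ncard = (WLSet γ v φ).ncard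

/-- `C_{k,r}`-stability of a partition of `V^k`. -/
def CStable {k : ℕ} (r : ℕ) (γ : Setoid (Tup V k)) : Prop :=
  r < k → ∀ u v : Tup V k, γ.r u v →
    ∀ i : Fin r → Fin k, Function.Injective i → ∀ w : Tup V k,
      (CSet γ u i w).ncard = (CSet γ v i w).ncard

/-- The matrix `χ^{γ,v}_{i,σ}`, with the colour `σ` given by a representative `w`. -/
def chiMat (F : Type) [Field F] {k : ℕ} (γ : Setoid (Tup V k)) (v : Tup V k)
    (i : Fin 2 → Fin k) (w : Tup V k) : Matrix V V F :=
  Matrix.of fun x y => if γ.r (substTup v i ![x, y]) w then (1 : F) else 0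

/-- The matrix `χ^{γ,v}_φ`, with the colour tuple `φ` given by representatives. -/
def chiMatT (F : Type) [Field F] {k : ℕ} (γ : Setoid (Tup V k)) (v : Tup V k)
    (φ : (Fin 2 → Fin k) → Tup V k) : Matrix V V F :=
  Matrix.of fun x y =>
    if ∀ i : Fin 2 → Fin k, Function.Injective i → γ.r (substTup v i ![x, y]) (φ i)
    then (1 : F) else 0

/-- `IM_k^F`-stability of a partition of `V^k`. -/
def IMStable (F : Type) [Field F] [Fintype V] [DecidableEq V] {k : ℕ}
    (γ : Setoid (Tup V k)) : Prop :=
  2 < k → ∀ u v : Tup V k, γ.r u v →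
    ∀ i : Fin 2 → Fin k, Function.Injective i →
      ∃ S : (Matrix V V F)ˣ, ∀ w : Tup V k,
        (S : Matrix V V F) * chiMat F γ u i w * ((S⁻¹ : (Matrix V V F)ˣ) : Matrix V V F)
          = chiMat F γ v i w

/-- `IMt_k^F`-stability of a partition of `V^k`. -/
def IMtStable (F : Type) [Field F] [Fintype V] [DecidableEq V] {k : ℕ}
    (γ : Setoid (Tup V k)) : Prop :=
  2 < k → ∀ u v : Tup V k, γ.r u v →
    ∃ S : (Matrix V V F)ˣ, ∀ φ : (Fin 2 → Fin k) → Tup V k,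
      (S : Matrix V V F) * chiMatT F γ u φ * ((S⁻¹ : (Matrix V V F)ˣ) : Matrix V V F)
        = chiMatT F γ v φ

/-- The refinement operator `WL_{k,r}`. -/
def WLop {k : ℕ} (r : ℕ) (γ : Setoid (Tup V k)) : Setoid (Tup V k) :=
  if r < k then
    { r := fun u v => γ.r u v ∧ ∀ φ : (Fin r → Fin k) → Tup V k,
        (WLSet γ u φ).ncard = (WLSet γ v φ).ncard
      iseqv := by
        refine ⟨fun u => ⟨γ.iseqv.refl u, fun _ => rfl⟩, ?_, ?_⟩
        · rintro u v ⟨h1, h2⟩; exact ⟨γ.iseqv.symm h1, fun φ => (h2 φ).symm⟩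
        · rintro u v w ⟨h1, h2⟩ ⟨h1', h2'⟩
          exact ⟨γ.iseqv.trans h1 h1', fun φ => (h2 φ).trans (h2' φ)⟩ }
  else γ

/-- The refinement operator `C_{k,r}`. -/
def Cop {k : ℕ} (r : ℕ) (γ : Setoid (Tup V k)) : Setoid (Tup V k) :=
  if r < k then
    { r := fun u v => γ.r u v ∧ ∀ i : Fin r → Fin k, Function.Injective i →
        ∀ w : Tup V k, (CSet γ u i w).ncard = (CSet γ v i w).ncard
      iseqv := by
        refine ⟨fun u => ⟨γ.iseqv.refl u, fun _ _ _ => rfl⟩, ?_, ?_⟩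
        · rintro u v ⟨h1, h2⟩; exact ⟨γ.iseqv.symm h1, fun i hi w => (h2 i hi w).symm⟩
        · rintro u v w ⟨h1, h2⟩ ⟨h1', h2'⟩
          exact ⟨γ.iseqv.trans h1 h1', fun i hi x => (h2 i hi x).trans (h2' i hi x)⟩ }
  else γ


theorem conjRefl {M : Type*} [Monoid M] (A : M) :
    ((1 : Mˣ) : M) * A * (((1 : Mˣ)⁻¹ : Mˣ) : M) = A := by simp

theorem conjSymm {M : Type*} [Monoid M] (S : Mˣ) {A B : M}
    (h : (S : M) * A * ((S⁻¹ : Mˣ) : M) = B) :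
    ((S⁻¹ : Mˣ) : M) * B * (((S⁻¹)⁻¹ : Mˣ) : M) = A := by
  subst h
  rw [inv_inv]
  simp [mul_assoc, Units.inv_mul_cancel_left, Units.inv_mul]

theorem conjTrans {M : Type*} [Monoid M] (S T : Mˣ) {A B C : M}
    (h1 : (S : M) * A * ((S⁻¹ : Mˣ) : M) = B)
    (h2 : (T : M) * B * ((T⁻¹ : Mˣ) : M) = C) :
    ((T * S : Mˣ) : M) * A * (((T * S)⁻¹ : Mˣ) : M) = C := by
  subst h1; subst h2
  simp [Units.val_mul, _root_.mul_inv_rev, mul_assoc]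

/-- The refinement operator `IM_k^F`. -/
def IMop (F : Type) [Field F] [Fintype V] [DecidableEq V] {k : ℕ}
    (γ : Setoid (Tup V k)) : Setoid (Tup V k) :=
  if 2 < k then
    { r := fun u v => γ.r u v ∧ ∀ i : Fin 2 → Fin k, Function.Injective i →
        ∃ S : (Matrix V V F)ˣ, ∀ w : Tup V k,
          (S : Matrix V V F) * chiMat F γ u i w * ((S⁻¹ : (Matrix V V F)ˣ) : Matrix V V F)
            = chiMat F γ v i w
      iseqv := by
        refine ⟨fun u => ⟨γ.iseqv.refl u, fun i _ => ⟨1, fun w => conjRefl _⟩⟩, ?_, ?_⟩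
        · rintro u v ⟨h1, h2⟩
          refine ⟨γ.iseqv.symm h1, fun i hi => ?_⟩
          obtain ⟨S, hS⟩ := h2 i hi
          exact ⟨S⁻¹, fun w => conjSymm S (hS w)⟩
        · rintro u v w ⟨h1, h2⟩ ⟨h1', h2'⟩
          refine ⟨γ.iseqv.trans h1 h1', fun i hi => ?_⟩
          obtain ⟨S, hS⟩ := h2 i hi
          obtain ⟨T, hT⟩ := h2' i hi
          exact ⟨T * S, fun x => conjTrans S T (hS x) (hT x)⟩ }
  else γ

/-- The refinement operator `IMt_k^F`. -/
def IMtop (F : Type) [Field F] [Fintype V] [DecidableEq V] {k : ℕ}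
    (γ : Setoid (Tup V k)) : Setoid (Tup V k) :=
  if 2 < k then
    { r := fun u v => γ.r u v ∧
        ∃ S : (Matrix V V F)ˣ, ∀ φ : (Fin 2 → Fin k) → Tup V k,
          (S : Matrix V V F) * chiMatT F γ u φ * ((S⁻¹ : (Matrix V V F)ˣ) : Matrix V V F)
            = chiMatT F γ v φ
      iseqv := by
        refine ⟨fun u => ⟨γ.iseqv.refl u, ⟨1, fun φ => conjRefl _⟩⟩, ?_, ?_⟩
        · rintro u v ⟨h1, ⟨S, hS⟩⟩
          exact ⟨γ.iseqv.symm h1, ⟨S⁻¹, fun φ => conjSymm S (hS φ)⟩⟩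
        · rintro u v w ⟨h1, ⟨S, hS⟩⟩ ⟨h1', ⟨T, hT⟩⟩
          exact ⟨γ.iseqv.trans h1 h1', ⟨T * S, fun φ => conjTrans S T (hS φ) (hT φ)⟩⟩ }
  else γ

/-- Iterate a refinement operator `|V|^k` times, reaching its stable fixed point. -/
def stabilize [Fintype V] {k : ℕ} (R : Setoid (Tup V k) → Setoid (Tup V k))
    (γ : Setoid (Tup V k)) : Setoid (Tup V k) :=
  R^[Fintype.card V ^ k] γ

/-- A graph on `V` : a labelled partition of `V²` that is a rainbow. -/
def IsGraph (Γ : Setoid (Tup V 2)) : Prop :=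
  (∀ u x y : V, Γ.r ![u, u] ![x, y] → x = y) ∧
  (∀ u v u' v' : V, Γ.r ![u, v] ![u', v'] ↔ Γ.r ![v, u] ![v', u'])

/-- The atomic-type partition `α_{k,Γ}` of `V^k` determined by a graph `Γ`. -/
def atomicPart {k : ℕ} (Γ : Setoid (Tup V 2)) : Setoid (Tup V k) where
  r u v := ∀ i j : Fin k, i ≠ j → Γ.r ![u i, u j] ![v i, v j]
  iseqv := ⟨fun _ _ _ _ => Γ.iseqv.refl _, fun h i j hij => Γ.iseqv.symm (h i j hij),
    fun h h' i j hij => Γ.iseqv.trans (h i j hij) (h' i j hij)⟩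

/-- `WL̄_{k,r}(Γ)`. -/
def WLbarR [Nonempty V] [Fintype V] (k r : ℕ) (Γ : Setoid (Tup V 2)) : Setoid (Tup V 2) :=
  if k ≤ 1 then Γ else prPart 2 (stabilize (WLop (k := k) r) (atomicPart Γ))

/-- `C̄_{k,r}(Γ)`. -/
def CbarR [Nonempty V] [Fintype V] (k r : ℕ) (Γ : Setoid (Tup V 2)) : Setoid (Tup V 2) :=
  if k ≤ 1 then Γ else prPart 2 (stabilize (Cop (k := k) r) (atomicPart Γ))

/-- `WL̄_k(Γ) = WL̄_{k,1}(Γ)`. -/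
def WLbar [Nonempty V] [Fintype V] (k : ℕ) (Γ : Setoid (Tup V 2)) : Setoid (Tup V 2) :=
  WLbarR k 1 Γ

/-- `C̄_k(Γ) = C̄_{k,1}(Γ)`. -/
def Cbar [Nonempty V] [Fintype V] (k : ℕ) (Γ : Setoid (Tup V 2)) : Setoid (Tup V 2) :=
  CbarR k 1 Γ

/-- `IM̄_k^F(Γ)`. -/
def IMbar (F : Type) [Field F] [Nonempty V] [Fintype V] [DecidableEq V]
    (k : ℕ) (Γ : Setoid (Tup V 2)) : Setoid (Tup V 2) :=
  if k ≤ 1 then Γ else prPart 2 (stabilize (IMop (k := k) F) (atomicPart Γ))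

/-- `IMt̄_k^F(Γ)`. -/
def IMtbar (F : Type) [Field F] [Nonempty V] [Fintype V] [DecidableEq V]
    (k : ℕ) (Γ : Setoid (Tup V 2)) : Setoid (Tup V 2) :=
  if k ≤ 1 then Γ else prPart 2 (stabilize (IMtop (k := k) F) (atomicPart Γ))

/-- A nonempty finite set together with a graph on it. -/
structure FinGraph where
  V : Type
  [instFintype : Fintype V]
  [instDecEq : DecidableEq V]
  [instNonempty : Nonempty V]
  Γ : Setoid (Tup V 2)
  isGraph : IsGraph Γ

attribute [instance] FinGraph.instFintype FinGraph.instDecEq FinGraph.instNonempty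

section AuxProofs

variable {V : Type}

lemma substTup_apply {k r : ℕ} (v : Tup V k) {i : Fin r → Fin k}
    (hi : Function.Injective i) (x : Tup V r) (s : Fin r) :
    substTup v i x (i s) = x s := by
  have h : ∃ t, i t = i s := ⟨s, rfl⟩
  simp only [substTup, dif_pos h]
  exact congrArg x (hi h.choose_spec)

lemma substTup_apply_not {k r : ℕ} (v : Tup V k) (i : Fin r → Fin k)
    (x : Tup V r) {j : Fin k} (h : ∀ s, i s ≠ j) :
    substTup v i x j = v j := by
  simp only [substTup, dif_neg (show ¬ ∃ s, i s = j by rintro ⟨s, hs⟩; exact h s hs)]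

lemma extendTup_self [Nonempty V] {k : ℕ} (w : Tup V k) : extendTup k w = w := by
  funext m
  simp only [extendTup, m.isLt, dif_pos, Fin.eta]

lemma rel_prTup [Nonempty V] {k : ℕ} {γ : Setoid (Tup V k)} (hc : Consistent k γ)
    {u v : Tup V k} (h : γ.r u v) (q : Fin k → Fin k) :
    γ.r (prTup q u) (prTup q v) := by
  have h2 := hc u v h q
  have h3 : γ.r (extendTup k (prTup q u)) (extendTup k (prTup q v)) := h2
  rwa [extendTup_self, extendTup_self] at h3

lemma exists_equiv_fibers {α β : Type*} [Finite α] (f g : α → β)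
    (h : ∀ b, Nat.card {a // f a = b} = Nat.card {a // g a = b}) :
    ∃ e : α ≃ α, ∀ a, g (e a) = f a := by
  have key : ∀ b, Nonempty ({a // f a = b} ≃ {a // g a = b}) := fun b =>
    Finite.card_eq.mp (h b)
  refine ⟨((Equiv.sigmaFiberEquiv f).symm.trans
      (Equiv.sigmaCongrRight (fun b => (key b).some))).trans (Equiv.sigmaFiberEquiv g),
      fun a => ?_⟩
  exact ((key (f a)).some ⟨a, rfl⟩).2

lemma ncard_eq_of_mem_iff {α : Type*} (e : α ≃ α) {S T : Set α}
    (h : ∀ a, a ∈ S ↔ e a ∈ T) : S.ncard = T.ncard := by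
  have hT : T = e '' S := by
    ext b
    obtain ⟨a, rfl⟩ := e.surjective b
    simp only [Set.mem_image]
    constructor
    · intro hb; exact ⟨a, (h a).mpr hb, rfl⟩
    · rintro ⟨a', ha', hea⟩
      obtain rfl := e.injective hea
      exact (h a').mp ha'
  rw [hT, Set.ncard_image_of_injective _ e.injective]

lemma exists_inj_avoid {k r : ℕ} (B : Finset (Fin k)) (hB : B.card ≤ k - r)
    (hrk : r ≤ k) :
    ∃ i' : Fin r → Fin k, Function.Injective i' ∧ ∀ s, i' s ∉ B := by
  have hcard : r ≤ Bᶜ.card := by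
    rw [Finset.card_compl, Fintype.card_fin]
    omega
  obtain ⟨T, hTsub, hTcard⟩ := Finset.exists_subset_card_eq hcard
  refine ⟨fun s => (T.orderIsoOfFin hTcard s : Fin k), ?_, ?_⟩
  · intro a b hab
    exact (T.orderIsoOfFin hTcard).injective (Subtype.ext hab)
  · intro s
    have h1 : ((T.orderIsoOfFin hTcard) s : Fin k) ∈ T := (T.orderIsoOfFin hTcard s).2
    have h2 := hTsub h1
    simpa using h2

lemma exists_substEquiv [Fintype V] {k r : ℕ} (γ : Setoid (Tup V k)) {u v : Tup V k}
    (i : Fin r → Fin k)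
    (hcount : ∀ w, (CSet γ u i w).ncard = (CSet γ v i w).ncard) :
    ∃ e : Tup V r ≃ Tup V r, ∀ x, γ.r (substTup u i x) (substTup v i (e x)) := by
  have hfib : ∀ b : Quotient γ,
      Nat.card {x : Tup V r // Quotient.mk γ (substTup u i x) = b}
        = Nat.card {x : Tup V r // Quotient.mk γ (substTup v i x) = b} := by
    intro b
    obtain ⟨y, rfl⟩ := Quotient.exists_rep b
    have h1 : Nat.card {x : Tup V r // Quotient.mk γ (substTup u i x) = Quotient.mk γ y}
        = (CSet γ u i y).ncard := by
      rw [← Nat.card_coe_set_eq]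
      exact Nat.card_congr (Equiv.subtypeEquivRight (fun x => by
        rw [Quotient.eq]; exact Iff.rfl))
    have h2 : Nat.card {x : Tup V r // Quotient.mk γ (substTup v i x) = Quotient.mk γ y}
        = (CSet γ v i y).ncard := by
      rw [← Nat.card_coe_set_eq]
      exact Nat.card_congr (Equiv.subtypeEquivRight (fun x => by
        rw [Quotient.eq]; exact Iff.rfl))
    rw [h1, h2, hcount y]
  obtain ⟨e, he⟩ := exists_equiv_fibers (fun x => Quotient.mk γ (substTup u i x))
      (fun x => Quotient.mk γ (substTup v i x)) hfib
  exact ⟨e, fun x => Quotient.exact (he x).symm⟩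

lemma copRel_iff {k r : ℕ} (hrk : r < k) (γ : Setoid (Tup V k)) (u v : Tup V k) :
    (Cop r γ).r u v ↔ γ.r u v ∧ ∀ i : Fin r → Fin k, Function.Injective i →
      ∀ w : Tup V k, (CSet γ u i w).ncard = (CSet γ v i w).ncard := by
  unfold Cop
  rw [if_pos hrk]
  exact Iff.rfl

lemma cop_eq {k r : ℕ} (hrk : ¬ r < k) (γ : Setoid (Tup V k)) : Cop r γ = γ := by
  unfold Cop
  rw [if_neg hrk]

lemma substTup_prTup {k r : ℕ} (u : Tup V k) (p : Fin k → Fin k)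
    {i : Fin r → Fin k} (hi : Function.Injective i)
    {i' : Fin r → Fin k} (hi' : Function.Injective i')
    (havoid : ∀ m : Fin k, (∀ s, i s ≠ m) → (∀ s, i' s ≠ p m))
    (x : Tup V r) :
    substTup (prTup p u) i x
      = prTup (fun m => if h : ∃ s, i s = m then i' h.choose else p m) (substTup u i' x) := by
  funext m
  by_cases h : ∃ s, i s = m
  · obtain ⟨s, rfl⟩ := h
    have h' : ∃ t, i t = i s := ⟨s, rfl⟩
    have hch : h'.choose = s := hi h'.choose_spec
    calc substTup (prTup p u) i x (i s) = x s := substTup_apply _ hi x s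
      _ = substTup u i' x (i' h'.choose) := by rw [hch, substTup_apply _ hi' x s]
      _ = _ := by
            show _ = substTup u i' x (if h : ∃ t, i t = i s then i' h.choose else p (i s))
            rw [dif_pos h']
  · push_neg at h
    have hq : (if hh : ∃ s, i s = m then i' hh.choose else p m) = p m :=
      dif_neg (by rintro ⟨s, hs⟩; exact h s hs)
    calc substTup (prTup p u) i x m = prTup p u m := substTup_apply_not _ _ _ h
      _ = u (p m) := rfl
      _ = substTup u i' x (p m) := (substTup_apply_not _ _ _ (havoid m h)).symm
      _ = _ := by
            show _ = substTup u i' x (if hh : ∃ s, i s = m then i' hh.choose else p m)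
            rw [hq]

lemma cop_rel_prTup [Nonempty V] [Fintype V] {k r : ℕ} {γ : Setoid (Tup V k)}
    (hcons : Consistent k γ) {u v : Tup V k} (h : (Cop r γ).r u v)
    (p : Fin k → Fin k) : (Cop r γ).r (prTup p u) (prTup p v) := by
  by_cases hrk : r < k
  · rw [copRel_iff hrk] at h ⊢
    obtain ⟨h1, h2⟩ := h
    refine ⟨rel_prTup hcons h1 p, ?_⟩
    intro i hi w
    have hBcard : (((Finset.univ.image i)ᶜ).image p).card ≤ k - r := by
      calc (((Finset.univ.image i)ᶜ).image p).card ≤ ((Finset.univ.image i)ᶜ).card :=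
            Finset.card_image_le
        _ = k - r := by
            rw [Finset.card_compl, Fintype.card_fin,
              Finset.card_image_of_injective _ hi, Finset.card_univ, Fintype.card_fin]
    obtain ⟨i', hi'inj, hi'avoid⟩ := exists_inj_avoid _ hBcard (le_of_lt hrk)
    have havoid : ∀ m : Fin k, (∀ s, i s ≠ m) → (∀ s, i' s ≠ p m) := by
      intro m hm s hs
      apply hi'avoid s
      rw [hs]
      apply Finset.mem_image_of_mem
      simp only [Finset.mem_compl, Finset.mem_image]
      rintro ⟨t, -, ht⟩
      exact hm t ht
    obtain ⟨e, he⟩ := exists_substEquiv γ i' (fun w => h2 i' hi'inj w)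
    apply ncard_eq_of_mem_iff e
    intro x
    show γ.r (substTup (prTup p u) i x) w ↔ γ.r (substTup (prTup p v) i (e x)) w
    rw [substTup_prTup u p hi hi'inj havoid x, substTup_prTup v p hi hi'inj havoid (e x)]
    have hrel := rel_prTup hcons (he x)
      (fun m => if h : ∃ s, i s = m then i' h.choose else p m)
    exact ⟨fun hh => γ.iseqv.trans (γ.iseqv.symm hrel) hh, fun hh => γ.iseqv.trans hrel hh⟩
  · rw [cop_eq hrk] at h ⊢
    exact rel_prTup hcons h p

end AuxProofs

/-- `C_{k,r}` is a graph-like refinement operator, and projections of graph-like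
fixed points are fixed points. -/
theorem c_refinement_procedure (V : Type) [Fintype V] [Nonempty V] (k r : ℕ) :
    (∀ γ : Setoid (Tup V k), GraphLike γ → GraphLike (Cop r γ)) ∧
    (∀ γ : Setoid (Tup V k), 2 ≤ k → GraphLike γ → PartEquiv γ (Cop r γ) →
      PartEquiv (prPart (k - 1) γ) (Cop r (prPart (k - 1) γ))) := by
  constructor
  · -- Part 1
    intro γ hGL
    by_cases hrk : r < k
    · obtain ⟨hinv, hcons, hpat⟩ := hGL
      have hck : Consistent k γ := hcons k le_rfl
      refine ⟨?_, ?_, ?_⟩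
      · intro u v huv τ
        exact cop_rel_prTup hck huv (fun m => τ.symm m)
      · intro r' hr' u v huv j
        show (Cop r γ).r (extendTup k (prTup j u)) (extendTup k (prTup j v))
        rcases Nat.eq_zero_or_pos r' with h0 | hpos
        · subst h0
          have hEq : extendTup k (prTup j u) = extendTup k (prTup j v) := by
            funext m
            simp [extendTup]
          rw [hEq]
        · have hext : ∀ w : Tup V k, extendTup k (prTup j w)
              = prTup (fun m => if h : (m : ℕ) < r' then j ⟨m, h⟩ else j ⟨r' - 1, by omega⟩) w := by
            intro w
            funext m
            by_cases hm : (m : ℕ) < r'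
            · simp [extendTup, prTup, hm]
            · simp [extendTup, prTup, hm, hpos]
          rw [hext u, hext v]
          exact cop_rel_prTup hck huv _
      · intro u v huv a b hab
        have h1 : γ.r u v := ((copRel_iff hrk γ u v).mp huv).1
        exact hpat u v h1 a b hab
    · rw [cop_eq hrk]
      exact hGL
  · -- Part 2
    intro γ hk2 hGL hstab
    have hck : Consistent k γ := hGL.2.1 k le_rfl
    constructor
    · intro a b hab
      by_cases hr : r < k - 1
      · exact ((copRel_iff hr _ a b).mp hab).1
      · rw [cop_eq hr] at hab
        exact hab
    · intro a b hab
      by_cases hr : r < k - 1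
      · rw [copRel_iff hr]
        refine ⟨hab, ?_⟩
        intro i hi z
        have hab' : γ.r (extendTup k a) (extendTup k b) := hab
        have hC := hstab.2 _ _ hab'
        have hrk : r < k := by omega
        have hcount := ((copRel_iff hrk γ _ _).mp hC).2
        have hiElt : ∀ s : Fin r, ((i s : ℕ)) < k := fun s => by
          have := (i s).isLt; omega
        set iE : Fin r → Fin k := fun s => ⟨(i s : ℕ), hiElt s⟩ with hiEdef
        have hiEinj : Function.Injective iE := by
          intro s t hst
          have hval : (iE s).val = (iE t).val := congrArg Fin.val hst
          exact hi (Fin.ext hval)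
        obtain ⟨e, he⟩ := exists_substEquiv γ iE (fun w => hcount iE hiEinj w)
        set q : Fin k → Fin k :=
          fun m => if h : (m : ℕ) < k - 1 then m else ⟨k - 1 - 1, by omega⟩ with hqdef
        have hkey : ∀ (w : Tup V (k - 1)) (x : Tup V r),
            extendTup k (substTup w i x) = prTup q (substTup (extendTup k w) iE x) := by
          intro w x
          funext m
          by_cases hm : (m : ℕ) < k - 1
          · have hqm : q m = m := dif_pos hm
            by_cases hex : ∃ s, i s = (⟨(m : ℕ), hm⟩ : Fin (k - 1))
            · obtain ⟨s, hs⟩ := hex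
              have h1 : extendTup k (substTup w i x) m = x s := by
                simp only [extendTup, dif_pos hm]
                rw [← hs, substTup_apply _ hi]
              have h2 : iE s = m := by
                apply Fin.ext
                show ((i s : ℕ)) = (m : ℕ)
                rw [hs]
              have h3 : prTup q (substTup (extendTup k w) iE x) m = x s := by
                show substTup (extendTup k w) iE x (q m) = x s
                rw [hqm, ← h2, substTup_apply _ hiEinj]
              rw [h1, h3]
            · push_neg at hex
              have hexiE : ∀ s, iE s ≠ m := by
                intro s hs
                apply hex s
                apply Fin.ext
                show ((i s : ℕ)) = (m : ℕ)
                exact congrArg Fin.val hs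
              have h1 : extendTup k (substTup w i x) m = w ⟨(m : ℕ), hm⟩ := by
                simp only [extendTup, dif_pos hm]
                rw [substTup_apply_not _ _ _ hex]
              have h3 : prTup q (substTup (extendTup k w) iE x) m = w ⟨(m : ℕ), hm⟩ := by
                show substTup (extendTup k w) iE x (q m) = _
                rw [hqm, substTup_apply_not _ _ _ hexiE]
                simp only [extendTup, dif_pos hm]
              rw [h1, h3]
          · have hlt2 : k - 1 - 1 < k - 1 := by omega
            have hqm : q m = ⟨k - 1 - 1, by omega⟩ := dif_neg hm
            by_cases hex : ∃ s, i s = (⟨k - 1 - 1, hlt2⟩ : Fin (k - 1))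
            · obtain ⟨s, hs⟩ := hex
              have h1 : extendTup k (substTup w i x) m = x s := by
                simp only [extendTup, dif_neg hm, dif_pos (show 0 < k - 1 by omega)]
                rw [← hs, substTup_apply _ hi]
              have h2 : iE s = (⟨k - 1 - 1, by omega⟩ : Fin k) := by
                apply Fin.ext
                show ((i s : ℕ)) = k - 1 - 1
                rw [hs]
              have h3 : prTup q (substTup (extendTup k w) iE x) m = x s := by
                show substTup (extendTup k w) iE x (q m) = x s
                rw [hqm, ← h2, substTup_apply _ hiEinj]
              rw [h1, h3]
            · push_neg at hex
              have hexiE : ∀ s, iE s ≠ (⟨k - 1 - 1, by omega⟩ : Fin k) := by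
                intro s hs
                apply hex s
                apply Fin.ext
                show ((i s : ℕ)) = k - 1 - 1
                exact congrArg Fin.val hs
              have h1 : extendTup k (substTup w i x) m = w ⟨k - 1 - 1, hlt2⟩ := by
                simp only [extendTup, dif_neg hm, dif_pos (show 0 < k - 1 by omega)]
                rw [substTup_apply_not _ _ _ hex]
              have h3 : prTup q (substTup (extendTup k w) iE x) m = w ⟨k - 1 - 1, hlt2⟩ := by
                show substTup (extendTup k w) iE x (q m) = _
                rw [hqm, substTup_apply_not _ _ _ hexiE]
                simp only [extendTup, dif_pos hlt2]
              rw [h1, h3]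
        apply ncard_eq_of_mem_iff e
        intro x
        show γ.r (extendTup k (substTup a i x)) (extendTup k z)
          ↔ γ.r (extendTup k (substTup b i (e x))) (extendTup k z)
        rw [hkey a x, hkey b (e x)]
        have hrel := rel_prTup hck (he x) q
        exact ⟨fun hh => γ.iseqv.trans (γ.iseqv.symm hrel) hh,
          fun hh => γ.iseqv.trans hrel hh⟩
      · rw [cop_eq hr]
        exact hab

end
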